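/- Let Λ be a proper, source-free topological k-graph. For each m, n ∈ ℕ^k with m ≤ n, the map ρ_{m,n} : Λ^n → Λ^m given by ρ_{m,n}(λ) := λ(0,m) is continuous and proper (preimages of compact sets are compact). -/

import Mathlib

/-- A topological `k`-graph (Yeend): a small category, presented algebraically on
its (second-countable, locally compact, Hausdorff) space of morphisms with
objects identified with identity morphisms, together with a continuous degree
functor `d : Λ → ℕ^k` satisfying the unique factorisation property.  The range
map is continuous, the source map is a local homeomorphism, and composition
(defined on the set of composable pairs) is continuous and open. -/
structure TopKGraph (k : ℕ) where
  M : Type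
  ts : TopologicalSpace M
  t2 : @T2Space M ts
  lc : @LocallyCompactSpace M ts
  sc : @SecondCountableTopology M ts
  r : M → M
  s : M → M
  comp : M → M → M
  d : M → Fin k → ℕ
  rr : ∀ lam, r (r lam) = r lam
  sr : ∀ lam, s (r lam) = r lam
  rs : ∀ lam, r (s lam) = s lam
  ss' : ∀ lam, s (s lam) = s lam
  r_comp : ∀ {lam mu}, s lam = r mu → r (comp lam mu) = r lam
  s_comp : ∀ {lam mu}, s lam = r mu → s (comp lam mu) = s mu
  comp_assoc : ∀ {lam mu nu}, s lam = r mu → s mu = r nu →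
      comp (comp lam mu) nu = comp lam (comp mu nu)
  id_comp : ∀ lam, comp (r lam) lam = lam
  comp_id : ∀ lam, comp lam (s lam) = lam
  d_comp : ∀ {lam mu}, s lam = r mu → d (comp lam mu) = d lam + d mu
  d_r : ∀ lam, d (r lam) = 0
  d_s : ∀ lam, d (s lam) = 0
  continuous_r : @Continuous M M ts ts r
  continuous_s : @Continuous M M ts ts s
  isLocalHomeomorph_s : @IsLocalHomeomorph M M ts ts s
  continuousOn_comp : @ContinuousOn (M × M) M (@instTopologicalSpaceProd M M ts ts) ts
      (fun p => comp p.1 p.2) {p | s p.1 = r p.2}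
  isOpenMap_comp : ∀ V : Set (M × M), @IsOpen (M × M) (@instTopologicalSpaceProd M M ts ts) V →
      @IsOpen M ts ((fun p : M × M => comp p.1 p.2) '' (V ∩ {p | s p.1 = r p.2}))
  isOpen_deg : ∀ n : Fin k → ℕ, @IsOpen M ts {lam | d lam = n}
  factor : ∀ (lam : M) (m n : Fin k → ℕ), d lam = m + n →
      ∃! p : M × M, s p.1 = r p.2 ∧ comp p.1 p.2 = lam ∧ d p.1 = m ∧ d p.2 = n

attribute [instance] TopKGraph.ts TopKGraph.t2 TopKGraph.lc TopKGraph.sc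

variable {k : ℕ}

/-- An `s`-section: a set contained in an open set on which the source map is
injective (equivalently, since `s` is a local homeomorphism, on which `s`
restricts to a homeomorphism onto its image). -/
def TopKGraph.IsSSection (G : TopKGraph k) (W : Set G.M) : Prop :=
  ∃ U : Set G.M, IsOpen U ∧ W ⊆ U ∧ Set.InjOn G.s U

/-- A topological `k`-graph is proper if, for each `m ∈ ℕ^k`, the preimage under
`r|_{Λ^m}` of any compact set is compact. -/
def TopKGraph.Proper (G : TopKGraph k) : Prop :=
  ∀ (m : Fin k → ℕ) (K : Set G.M), IsCompact K →
    IsCompact {lam : G.M | G.d lam = m ∧ G.r lam ∈ K}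

/-- A topological `k`-graph is source-free if `vΛ^{e_i} ≠ ∅` for every vertex `v`
and every `i`. -/
def TopKGraph.SourceFree (G : TopKGraph k) : Prop :=
  ∀ v : G.M, G.r v = v → ∀ i : Fin k,
    ∃ lam : G.M, G.d lam = Pi.single i 1 ∧ G.r lam = v

/-- A normalised `𝕋`-valued 2-cocycle on a topological `k`-graph. -/
def TopKGraph.IsCocycle (G : TopKGraph k) (c : G.M → G.M → Circle) : Prop :=
  (∀ lam mu nu, G.s lam = G.r mu → G.s mu = G.r nu →
      c lam mu * c (G.comp lam mu) nu = c lam (G.comp mu nu) * c mu nu) ∧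
  (∀ lam, c lam (G.s lam) = 1) ∧ (∀ lam, c (G.r lam) lam = 1)

/-- A continuous normalised `𝕋`-valued 2-cocycle on a topological `k`-graph:
normalised, satisfies the cocycle identity, and is continuous on the set of
composable pairs. -/
def TopKGraph.IsContinuousCocycle (G : TopKGraph k) (c : G.M → G.M → Circle) : Prop :=
  G.IsCocycle c ∧
    ContinuousOn (fun p : G.M × G.M => c p.1 p.2) {p | G.s p.1 = G.r p.2}
open scoped ENNReal ComplexConjugate

/-- The unique factorisation `lam = p.1 ⬝ p.2` of a path `lam` with `d(p.1) = m`
(meaningful whenever `m ≤ d lam`, by the unique factorisation property); thus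
`(pathFac G m lam).1 = λ(0,m)` and, for `lam ∈ Λ^n`, `(pathFac G m lam).2 = λ(m,n)`. -/
noncomputable def TopKGraph.pathFac (G : TopKGraph k) (m : Fin k → ℕ) (lam : G.M) :
    G.M × G.M :=
  letI := Classical.propDecidable; if h : ∃ p : G.M × G.M, G.s p.1 = G.r p.2 ∧ G.comp p.1 p.2 = lam ∧
      G.d p.1 = m ∧ G.d p.2 = G.d lam - m then h.choose else (lam, lam)

/-- An infinite path in `Λ`: a degree-preserving functor `x : Ω_k → Λ`, recorded
by its segments `x(m,n) ∈ Λ^{n-m}` for `m ≤ n` in `ℕ^k`. -/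
structure TopKGraph.InfPath (G : TopKGraph k) where
  seg : (Fin k → ℕ) → (Fin k → ℕ) → G.M
  d_seg : ∀ {m n : Fin k → ℕ}, m ≤ n → G.d (seg m n) = n - m
  seg_id : ∀ m : Fin k → ℕ, seg m m = G.r (seg m m)
  s_seg : ∀ {m n p : Fin k → ℕ}, m ≤ n → n ≤ p → G.s (seg m n) = G.r (seg n p)
  comp_seg : ∀ {m n p : Fin k → ℕ}, m ≤ n → n ≤ p →
      G.comp (seg m n) (seg n p) = seg m p

/-- The cylinder set `Z(U) = {x ∈ Λ^∞ : x(0,n) ∈ U for some n}`. -/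
def TopKGraph.cyl (G : TopKGraph k) (U : Set G.M) : Set G.InfPath :=
  {x | ∃ n : Fin k → ℕ, x.seg 0 n ∈ U}

/-- The topology on the infinite-path space `Λ^∞` is generated by the cylinder
sets `Z(U)` of open subsets `U` of the `Λ^n`, `n ∈ ℕ^k`. -/
instance TopKGraph.instTopInfPath (G : TopKGraph k) : TopologicalSpace G.InfPath :=
  TopologicalSpace.generateFrom
    {S | ∃ (n : Fin k → ℕ) (U : Set G.M), IsOpen U ∧ (∀ lam ∈ U, G.d lam = n) ∧
      S = G.cyl U}

/-- The shift map `T^p : Λ^∞ → Λ^∞`, `T^p(x)(m,n) = x(m+p, n+p)`. -/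
def TopKGraph.shift (G : TopKGraph k) (p : Fin k → ℕ) (x : G.InfPath) : G.InfPath where
  seg m n := x.seg (m + p) (n + p)
  d_seg := by
    intro m n h
    rw [x.d_seg (add_le_add h (le_refl p))]
    funext i
    simp only [Pi.sub_apply, Pi.add_apply]
    omega
  seg_id m := x.seg_id (m + p)
  s_seg := fun h1 h2 => x.s_seg (add_le_add h1 (le_refl p)) (add_le_add h2 (le_refl p))
  comp_seg := fun h1 h2 => x.comp_seg (add_le_add h1 (le_refl p)) (add_le_add h2 (le_refl p))

lemma TopKGraph.pathFac_spec {k : ℕ} (G : TopKGraph k) {m : Fin k → ℕ} {lam : G.M}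
    (hm : m ≤ G.d lam) :
    G.s (G.pathFac m lam).1 = G.r (G.pathFac m lam).2 ∧
    G.comp (G.pathFac m lam).1 (G.pathFac m lam).2 = lam ∧
    G.d (G.pathFac m lam).1 = m ∧ G.d (G.pathFac m lam).2 = G.d lam - m := by
  classical
  have hd : G.d lam = m + (G.d lam - m) := by
    funext i; have h2 : m i ≤ G.d lam i := hm i; simp only [Pi.add_apply, Pi.sub_apply]; omega
  obtain ⟨p, hp, -⟩ := G.factor lam m (G.d lam - m) hd
  have h : ∃ p : G.M × G.M, G.s p.1 = G.r p.2 ∧ G.comp p.1 p.2 = lam ∧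
      G.d p.1 = m ∧ G.d p.2 = G.d lam - m := ⟨p, hp⟩
  rw [TopKGraph.pathFac, dif_pos h]
  exact h.choose_spec

lemma TopKGraph.pathFac_unique {k : ℕ} (G : TopKGraph k) {m : Fin k → ℕ} {lam : G.M}
    (hm : m ≤ G.d lam) (p : G.M × G.M)
    (hp : G.s p.1 = G.r p.2 ∧ G.comp p.1 p.2 = lam ∧ G.d p.1 = m ∧ G.d p.2 = G.d lam - m) :
    p = G.pathFac m lam := by
  have hd : G.d lam = m + (G.d lam - m) := by
    funext i; have h2 : m i ≤ G.d lam i := hm i; simp only [Pi.add_apply, Pi.sub_apply]; omega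
  obtain ⟨q, -, huniq⟩ := G.factor lam m (G.d lam - m) hd
  rw [huniq p hp, huniq _ (G.pathFac_spec hm)]

/-- Let `Λ` be a proper, source-free topological `k`-graph.  For
`m ≤ n` in `ℕ^k`, the map `ρ_{m,n} : Λ^n → Λ^m`, `ρ_{m,n}(λ) := λ(0,m)`, is
continuous and proper (preimages of compact sets are compact). -/
theorem rho_continuous_and_proper {k : ℕ} (G : TopKGraph k)
    (hP : G.Proper) (hSF : G.SourceFree) (m n : Fin k → ℕ) (hmn : m ≤ n) :
    Continuous (fun lam : {lam : G.M // G.d lam = n} => (G.pathFac m lam.1).1) ∧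
    ∀ K : Set G.M, IsCompact K →
      IsCompact {lam : {lam : G.M // G.d lam = n} | (G.pathFac m lam.1).1 ∈ K} := by
  classical
  have hmd : ∀ lam : G.M, G.d lam = n → m ≤ G.d lam := fun lam h => h ▸ hmn
  have keyd : ∀ p : G.M × G.M, G.s p.1 = G.r p.2 → G.d p.1 = m → G.d p.2 = n - m →
      G.d (G.comp p.1 p.2) = n := by
    intro p h1 h2 h3
    rw [G.d_comp h1, h2, h3]
    funext i; have h4 : m i ≤ n i := hmn i; simp only [Pi.add_apply, Pi.sub_apply]; omega
  -- The equivalence between composable pairs of degrees (m, n-m) and Λ^n.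
  let e : {p : G.M × G.M // G.s p.1 = G.r p.2 ∧ G.d p.1 = m ∧ G.d p.2 = n - m} ≃
      {lam : G.M // G.d lam = n} :=
    { toFun := fun p => ⟨G.comp p.1.1 p.1.2, keyd p.1 p.2.1 p.2.2.1 p.2.2.2⟩
      invFun := fun lam => ⟨G.pathFac m lam.1, by
        obtain ⟨h1, h2, h3, h4⟩ := G.pathFac_spec (hmd lam.1 lam.2)
        exact ⟨h1, h3, by rw [h4, lam.2]⟩⟩
      left_inv := fun p => by
        apply Subtype.ext
        have hdn : G.d (G.comp p.1.1 p.1.2) = n := keyd p.1 p.2.1 p.2.2.1 p.2.2.2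
        exact (G.pathFac_unique (hmd _ hdn) p.1
          ⟨p.2.1, rfl, p.2.2.1, by rw [hdn]; exact p.2.2.2⟩).symm
      right_inv := fun lam => by
        apply Subtype.ext
        exact (G.pathFac_spec (hmd lam.1 lam.2)).2.1 }
  have hcont : Continuous e := by
    apply Continuous.subtype_mk
    exact G.continuousOn_comp.comp_continuous continuous_subtype_val fun p => p.2.1
  have hopen : IsOpenMap e := by
    intro W hW
    rw [isOpen_induced_iff] at hW
    obtain ⟨V, hV, rfl⟩ := hW
    have hdegs : IsOpen {p : G.M × G.M | G.d p.1 = m ∧ G.d p.2 = n - m} := by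
      have h1 : IsOpen (Prod.fst ⁻¹' {lam : G.M | G.d lam = m} : Set (G.M × G.M)) :=
        (G.isOpen_deg m).preimage continuous_fst
      have h2 : IsOpen (Prod.snd ⁻¹' {lam : G.M | G.d lam = n - m} : Set (G.M × G.M)) :=
        (G.isOpen_deg (n - m)).preimage continuous_snd
      exact h1.inter h2
    have hO : IsOpen ((fun p : G.M × G.M => G.comp p.1 p.2) ''
        ((V ∩ {p : G.M × G.M | G.d p.1 = m ∧ G.d p.2 = n - m}) ∩ {p | G.s p.1 = G.r p.2})) :=
      G.isOpenMap_comp _ (hV.inter hdegs)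
    have heq : e '' (Subtype.val ⁻¹' V) = Subtype.val ⁻¹' ((fun p : G.M × G.M => G.comp p.1 p.2) ''
        ((V ∩ {p : G.M × G.M | G.d p.1 = m ∧ G.d p.2 = n - m}) ∩ {p | G.s p.1 = G.r p.2})) := by
      ext lam
      constructor
      · rintro ⟨p, hpV, rfl⟩
        exact ⟨p.1, ⟨⟨hpV, p.2.2.1, p.2.2.2⟩, p.2.1⟩, rfl⟩
      · rintro ⟨q, ⟨⟨hqV, hq1, hq2⟩, hqc⟩, hq⟩
        exact ⟨⟨q, hqc, hq1, hq2⟩, hqV, Subtype.ext hq⟩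
    rw [heq]
    exact hO.preimage continuous_subtype_val
  have hcρ : Continuous fun lam : {lam : G.M // G.d lam = n} => (G.pathFac m lam.1).1 := by
    have hsc : Continuous fun lam : {lam : G.M // G.d lam = n} => e.symm lam := by
      exact (Equiv.toHomeomorphOfContinuousOpen e hcont hopen).symm.continuous
    exact (continuous_fst.comp continuous_subtype_val).comp hsc
  refine ⟨hcρ, fun K hK => ?_⟩
  have hrK : IsCompact (G.r '' K) := hK.image G.continuous_r
  have hC : IsCompact {lam : G.M | G.d lam = n ∧ G.r lam ∈ G.r '' K} := hP n _ hrK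
  have hC' : IsCompact {lam : {lam : G.M // G.d lam = n} | G.r lam.1 ∈ G.r '' K} := by
    rw [Subtype.isCompact_iff]
    have : Subtype.val '' {lam : {lam : G.M // G.d lam = n} | G.r lam.1 ∈ G.r '' K} =
        {lam : G.M | G.d lam = n ∧ G.r lam ∈ G.r '' K} := by
      ext lam
      constructor
      · rintro ⟨⟨x, hx⟩, hmem, rfl⟩; exact ⟨hx, hmem⟩
      · rintro ⟨h1, h2⟩; exact ⟨⟨lam, h1⟩, h2, rfl⟩
    rw [this]; exact hC
  have hsub : {lam : {lam : G.M // G.d lam = n} | (G.pathFac m lam.1).1 ∈ K} ⊆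
      {lam : {lam : G.M // G.d lam = n} | G.r lam.1 ∈ G.r '' K} := by
    intro lam hlam
    obtain ⟨h1, h2, -, -⟩ := G.pathFac_spec (hmd lam.1 lam.2)
    have hr : G.r lam.1 = G.r (G.pathFac m lam.1).1 :=
      (congrArg G.r h2).symm.trans (G.r_comp h1)
    exact ⟨(G.pathFac m lam.1).1, hlam, hr.symm⟩
  exact hC'.of_isClosed_subset (hK.isClosed.preimage hcρ) hsub
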